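/- arXiv:2504.04396 — 2 statements merged into one kernel-verified Lean document; each statement's English description precedes it below -/
import Mathlib

section
/- Preserving a quaternion-Hermitian form is equivalent to preserving the associated reversion form: for every n, every h ∈ Mₙ(ℍ), and every A ∈ Mₙ(ℍ), one has A† · h · A = h if and only if revᵀ(A) · (jI · h) · A = jI · h, where jI denotes the scalar matrix j · Iₙ and A† is the entrywise quaternion-conjugate transpose of A. -/
open Quaternion Matrix

/-- Quaternion reversion: conjugation of only the `j` component. -/
def rev (q : ℍ[ℝ]) : ℍ[ℝ] := ⟨q.re, q.imI, -q.imJ, q.imK⟩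

/-- The reversion-transpose of a quaternionic matrix. -/
def revT {n : ℕ} (A : Matrix (Fin n) (Fin n) ℍ[ℝ]) : Matrix (Fin n) (Fin n) ℍ[ℝ] :=
  (A.map rev)ᵀ

/-- The conjugate transpose of a quaternionic matrix. -/
def dagger {n : ℕ} (A : Matrix (Fin n) (Fin n) ℍ[ℝ]) : Matrix (Fin n) (Fin n) ℍ[ℝ] :=
  (A.map (fun q => star q))ᵀ

/-- The quaternion `j`. -/
def jq : ℍ[ℝ] := ⟨0, 0, 1, 0⟩

lemma rev_mul_jq (q : ℍ[ℝ]) : rev q * jq = jq * star q := by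
  ext <;> simp only [Quaternion.re_mul, Quaternion.imI_mul,
    Quaternion.imJ_mul, Quaternion.imK_mul] <;> simp [rev, jq]

lemma jq_ne_zero : jq ≠ 0 := by
  intro hq
  have : (jq.imJ : ℝ) = 0 := by rw [hq]; rfl
  simp [jq] at this

lemma revT_mul_jq_one {n : ℕ} (A : Matrix (Fin n) (Fin n) ℍ[ℝ]) :
    revT A * (jq • (1 : Matrix (Fin n) (Fin n) ℍ[ℝ])) = jq • dagger A := by
  apply Matrix.ext; intro i k
  simp [revT, dagger, Matrix.mul_apply, Matrix.one_apply, mul_ite,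
    Finset.sum_ite_eq, rev_mul_jq, smul_eq_mul]

/-- Preserving a quaternion-Hermitian form `h` is equivalent to preserving the associated
reversion form `j·h`. -/
theorem preserve_hermitian_iff_preserve_reversion_form
    (n : ℕ) (h A : Matrix (Fin n) (Fin n) ℍ[ℝ]) :
    dagger A * h * A = h ↔
      revT A * ((jq • (1 : Matrix (Fin n) (Fin n) ℍ[ℝ])) * h) * A
        = (jq • (1 : Matrix (Fin n) (Fin n) ℍ[ℝ])) * h := by
  have key : revT A * ((jq • (1 : Matrix (Fin n) (Fin n) ℍ[ℝ])) * h) * A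
      = jq • (dagger A * h * A) := by
    rw [← mul_assoc, revT_mul_jq_one, Matrix.smul_mul, Matrix.smul_mul]
  rw [key, Matrix.smul_mul, one_mul]
  constructor
  · intro he; rw [he]
  · intro he
    exact smul_right_injective (Matrix (Fin n) (Fin n) ℍ[ℝ]) jq_ne_zero he
end

section
/- Sylvester's law of inertia fails for quaternion reversion forms: for all natural numbers p and q with n = p + q ≥ 1, there exists an invertible matrix C ∈ Mₙ(ℍ) such that revᵀ(C) · I_{p,q} · C = Iₙ, where I_{p,q} is the diagonal matrix with p entries +1 and q entries −1; hence every signature of a reversion-symmetric form is equivalent to the identity. -/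
open Quaternion Matrix

/-- The signature matrix `I_{p,q}` with `p` entries `+1` and `q` entries `−1`. -/
noncomputable def Ipq (p q : ℕ) : Matrix (Fin (p + q)) (Fin (p + q)) ℍ[ℝ] :=
  Matrix.diagonal fun t => if (t : ℕ) < p then 1 else -1

/-- Sylvester's law of inertia fails for quaternion reversion forms: every signature is
equivalent to the identity via an invertible change of basis. -/
theorem sylvester_fails_for_reversion_forms (p q : ℕ) (hpq : 1 ≤ p + q) :
    ∃ C : Matrix (Fin (p + q)) (Fin (p + q)) ℍ[ℝ],
      IsUnit C ∧ revT C * Ipq p q * C = 1 := by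
  set kq : ℍ[ℝ] := ⟨0, 0, 0, 1⟩ with hk
  set f : Fin (p + q) → ℍ[ℝ] := fun t => if (t : ℕ) < p then 1 else kq with hf
  set g : Fin (p + q) → ℍ[ℝ] := fun t => if (t : ℕ) < p then 1 else -kq with hg
  have hfg : ∀ t, f t * g t = 1 := by
    intro t
    simp only [hf, hg]
    by_cases h : (t : ℕ) < p
    · simp [h]
    · simp only [h, if_false]
      ext <;> simp [show kq.re = 0 from rfl, show kq.imI = 0 from rfl, show kq.imJ = 0 from rfl, show kq.imK = 1 from rfl]
  have hgf : ∀ t, g t * f t = 1 := by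
    intro t
    simp only [hf, hg]
    by_cases h : (t : ℕ) < p
    · simp [h]
    · simp only [h, if_false]
      ext <;> simp [show kq.re = 0 from rfl, show kq.imI = 0 from rfl, show kq.imJ = 0 from rfl, show kq.imK = 1 from rfl]
  refine ⟨Matrix.diagonal f, ?_, ?_⟩
  · exact ⟨⟨Matrix.diagonal f, Matrix.diagonal g,
      by rw [Matrix.diagonal_mul_diagonal, ← Matrix.diagonal_one]; exact congrArg _ (funext hfg),
      by rw [Matrix.diagonal_mul_diagonal, ← Matrix.diagonal_one]; exact congrArg _ (funext hgf)⟩,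
      rfl⟩
  · have hrevf : (fun m => rev (f m)) = f := by
      funext t
      simp only [hf]
      by_cases h : (t : ℕ) < p
      · simp only [h, if_true]
        show rev 1 = 1
        ext <;> simp [rev]
      · simp only [h, if_false]
        show rev kq = kq
        simp [rev, hk]
        rfl
    have hmap : (Matrix.diagonal f).map rev = Matrix.diagonal f := by
      rw [Matrix.diagonal_map (by show rev 0 = 0; ext <;> simp [rev]), hrevf]
    have hprod : (fun i => f i * (if (i : ℕ) < p then (1:ℍ[ℝ]) else -1) * f i)
        = fun _ => (1:ℍ[ℝ]) := by
      funext t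
      simp only [hf]
      by_cases h : (t : ℕ) < p
      · simp [h]
      · simp only [h, if_false]
        ext <;> simp [show kq.re = 0 from rfl, show kq.imI = 0 from rfl, show kq.imJ = 0 from rfl, show kq.imK = 1 from rfl]
    rw [revT, hmap, Matrix.diagonal_transpose, Ipq, Matrix.diagonal_mul_diagonal,
      Matrix.diagonal_mul_diagonal, hprod, Matrix.diagonal_one]
end
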